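/- Let α_R, α_F ∈ [0,1), let R be the real 2×2 matrix with rows (1, −α_R) and (−α_F, 1), let T_D : ℝ ⇒ ℝ be a monotone set-valued operator, and define T_NPN : ℝ² ⇒ ℝ² by T_NPN(v₁,v₂) := {R·(u₁,u₂) : u₁ ∈ T_D(v₁), u₂ ∈ T_D(v₂)}. Then for every ρ < 0, the operator T_NPN is (1/(8ρ), ρ)-semimonotone: ⟨x − y, u − v⟩ ≥ (1/(8ρ))·‖x − y‖² + ρ·‖u − v‖² for all (x,u), (y,v) in the graph of T_NPN. -/

import Mathlib

/-- The Ebers–Moll matrix with rows `(1, -αR)` and `(-αF, 1)`, applied to a vector of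
`ℝ²` (with the Euclidean inner product and norm). -/
noncomputable def applyEM (aR aF : ℝ) (w : EuclideanSpace ℝ (Fin 2)) :
    EuclideanSpace ℝ (Fin 2) :=
  (WithLp.equiv 2 (Fin 2 → ℝ)).symm
    ((Matrix.of ![![1, -aR], ![-aF, 1]]).mulVec (WithLp.equiv 2 (Fin 2 → ℝ) w))

/-- A set-valued operator `T_D : ℝ ⇒ ℝ` is monotone if `(u - v)(x - y) ≥ 0` whenever
`u ∈ T_D(x)` and `v ∈ T_D(y)`. -/
def MonotoneSetValued (TD : ℝ → Set ℝ) : Prop :=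
  ∀ ⦃x u y v : ℝ⦄, u ∈ TD x → v ∈ TD y → (u - v) * (x - y) ≥ 0

/-- The Ebers–Moll transistor operator `T_NPN : ℝ² ⇒ ℝ²` built from the diode law `T_D`. -/
noncomputable def TNPN (aR aF : ℝ) (TD : ℝ → Set ℝ) (v : EuclideanSpace ℝ (Fin 2)) :
    Set (EuclideanSpace ℝ (Fin 2)) :=
  {w | ∃ u₁ ∈ TD (v 0), ∃ u₂ ∈ TD (v 1),
    w = applyEM aR aF ((WithLp.equiv 2 (Fin 2 → ℝ)).symm ![u₁, u₂])}

/-- Core scalar case: the "b side" is bad (`q < β p`), signs normalized so that `a, q ≥ 0`. -/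
lemma stmt14_core (α β ρ a b p q : ℝ) (hα1 : α ≤ 1) (hβ : 0 ≤ β) (hβ1 : β ≤ 1)
    (hρ : ρ < 0) (ha : 0 ≤ a) (hq : 0 ≤ q) (hX : q < β * p) :
    (a * (p - α * q) + b * (q - β * p)) * (8 * ρ) ≤
      (a ^ 2 + b ^ 2) + 8 * ρ ^ 2 * ((p - α * q) ^ 2 + (q - β * p) ^ 2) := by
  have hp : 0 < p := by
    rcases le_or_gt p 0 with h | h
    · nlinarith [mul_nonneg hβ (neg_nonneg.2 h)]
    · exact h
  have hY : 0 < p - α * q := by nlinarith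
  have hYX : β * p - q ≤ p - α * q := by nlinarith
  nlinarith [sq_nonneg (b + 4 * ρ * (β * p - q)), sq_nonneg a,
    mul_nonneg (mul_nonneg (sq_nonneg ρ) (by linarith : (0:ℝ) ≤ (p - α * q) - (β * p - q)))
      (by linarith : (0:ℝ) ≤ (p - α * q) + (β * p - q)),
    mul_nonneg (mul_nonneg (by linarith : (0:ℝ) ≤ -(8 * ρ)) ha) hY.le]

/-- Scalar form of the semimonotonicity inequality. -/
lemma stmt14_key (α β ρ a b p q : ℝ) (hα : 0 ≤ α) (hα1 : α ≤ 1) (hβ : 0 ≤ β) (hβ1 : β ≤ 1)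
    (hρ : ρ < 0) (h1 : 0 ≤ a * p) (h2 : 0 ≤ b * q) :
    1 / (8 * ρ) * (a ^ 2 + b ^ 2) + ρ * ((p - α * q) ^ 2 + (q - β * p) ^ 2) ≤
      a * (p - α * q) + b * (q - β * p) := by
  have h8 : 8 * ρ < 0 := by linarith
  have h8' : (8 * ρ) ≠ 0 := ne_of_lt h8
  have hrw : 1 / (8 * ρ) * (a ^ 2 + b ^ 2) + ρ * ((p - α * q) ^ 2 + (q - β * p) ^ 2)
      = ((a ^ 2 + b ^ 2) + 8 * ρ ^ 2 * ((p - α * q) ^ 2 + (q - β * p) ^ 2)) / (8 * ρ) := by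
    field_simp
  rw [hrw, div_le_iff_of_neg h8]
  rcases le_or_gt 0 (b * (q - β * p)) with hB | hB
  · rcases le_or_gt 0 (a * (p - α * q)) with hA | hA
    · nlinarith [sq_nonneg a, sq_nonneg b, sq_nonneg (ρ * (p - α * q)), sq_nonneg (ρ * (q - β * p)),
        mul_nonpos_of_nonneg_of_nonpos (by linarith : (0:ℝ) ≤ a * (p - α * q) + b * (q - β * p))
          (le_of_lt h8)]
    · -- a*(p - α q) < 0 : swap roles (a,p,α)↔(b,q,β).
      rcases mul_neg_iff.mp hA with ⟨ha, hs⟩ | ⟨ha, hs⟩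
      · have hp : 0 ≤ p := le_of_mul_le_mul_left (by linarith : a * 0 ≤ a * p) ha
        have hq : 0 < q := by
          rcases le_or_gt q 0 with h | h
          · nlinarith [mul_nonneg hα (neg_nonneg.2 h)]
          · exact h
        have hb : 0 ≤ b := le_of_mul_le_mul_right (by linarith : 0 * q ≤ b * q) hq
        have := stmt14_core β α ρ b a q p hβ1 hα hα1 hρ hb hp (by linarith)
        linarith
      · have hp : p ≤ 0 := le_of_mul_le_mul_left (by linarith : -a * p ≤ -a * 0) (by linarith)
        have hq : q < 0 := by
          rcases lt_or_ge q 0 with h | h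
          · exact h
          · nlinarith [mul_nonneg hα h]
        have hb : b ≤ 0 := le_of_mul_le_mul_right (by linarith : b * -q ≤ 0 * -q) (by linarith)
        have := stmt14_core β α ρ (-b) (-a) (-q) (-p) hβ1 hα hα1 hρ (by linarith) (by linarith)
          (by linarith)
        linarith
  · -- b*(q - β p) < 0
    rcases mul_neg_iff.mp hB with ⟨hb, hs⟩ | ⟨hb, hs⟩
    · have hq : 0 ≤ q := le_of_mul_le_mul_left (by linarith : b * 0 ≤ b * q) hb
      have hp : 0 < p := by
        rcases le_or_gt p 0 with h | h
        · nlinarith [mul_nonneg hβ (neg_nonneg.2 h)]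
        · exact h
      have ha : 0 ≤ a := le_of_mul_le_mul_right (by linarith : 0 * p ≤ a * p) hp
      exact stmt14_core α β ρ a b p q hα1 hβ hβ1 hρ ha hq (by linarith)
    · have hq : q ≤ 0 := le_of_mul_le_mul_left (by linarith : -b * q ≤ -b * 0) (by linarith)
      have hp : p < 0 := by
        rcases lt_or_ge p 0 with h | h
        · exact h
        · nlinarith [mul_nonneg hβ h]
      have ha : a ≤ 0 := le_of_mul_le_mul_right (by linarith : a * -p ≤ 0 * -p) (by linarith)
      have := stmt14_core α β ρ (-a) (-b) (-p) (-q) hα1 hβ hβ1 hρ (by linarith) (by linarith)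
        (by linarith)
      linarith

lemma stmt14_applyEM_apply0 (aR aF u₁ u₂ : ℝ) :
    applyEM aR aF ((WithLp.equiv 2 (Fin 2 → ℝ)).symm ![u₁, u₂]) 0 = u₁ - aR * u₂ := by
  simp [applyEM, Matrix.mulVec, dotProduct, Fin.sum_univ_two]
  ring

lemma stmt14_applyEM_apply1 (aR aF u₁ u₂ : ℝ) :
    applyEM aR aF ((WithLp.equiv 2 (Fin 2 → ℝ)).symm ![u₁, u₂]) 1 = u₂ - aF * u₁ := by
  simp [applyEM, Matrix.mulVec, dotProduct, Fin.sum_univ_two]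
  ring

theorem stmt_14 (aR aF : ℝ) (haR : aR ∈ Set.Ico (0 : ℝ) 1) (haF : aF ∈ Set.Ico (0 : ℝ) 1)
    (TD : ℝ → Set ℝ) (hTD : MonotoneSetValued TD) (ρ : ℝ) (hρ : ρ < 0) :
    ∀ ⦃x u y v : EuclideanSpace ℝ (Fin 2)⦄, u ∈ TNPN aR aF TD x → v ∈ TNPN aR aF TD y →
      (inner ℝ (x - y) (u - v) : ℝ) ≥ 1 / (8 * ρ) * ‖x - y‖ ^ 2 + ρ * ‖u - v‖ ^ 2 := by
  intro x u y v hu hv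
  obtain ⟨a₁, ha₁, a₂, ha₂, hue⟩ := hu
  obtain ⟨b₁, hb₁, b₂, hb₂, hve⟩ := hv
  have e1 : (inner ℝ (x - y) (u - v) : ℝ) =
      (x 0 - y 0) * ((a₁ - b₁) - aR * (a₂ - b₂)) +
      (x 1 - y 1) * ((a₂ - b₂) - aF * (a₁ - b₁)) := by
    rw [PiLp.inner_apply, Fin.sum_univ_two]
    simp only [PiLp.sub_apply, RCLike.inner_apply, conj_trivial, hue, hve,
      stmt14_applyEM_apply0, stmt14_applyEM_apply1]
    ring
  have e2 : ‖x - y‖ ^ 2 = (x 0 - y 0) ^ 2 + (x 1 - y 1) ^ 2 := by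
    rw [← real_inner_self_eq_norm_sq, PiLp.inner_apply, Fin.sum_univ_two]
    simp only [PiLp.sub_apply, RCLike.inner_apply, conj_trivial]
    ring
  have e3 : ‖u - v‖ ^ 2 = ((a₁ - b₁) - aR * (a₂ - b₂)) ^ 2 + ((a₂ - b₂) - aF * (a₁ - b₁)) ^ 2 := by
    rw [← real_inner_self_eq_norm_sq, PiLp.inner_apply, Fin.sum_univ_two]
    simp only [PiLp.sub_apply, RCLike.inner_apply, conj_trivial, hue, hve,
      stmt14_applyEM_apply0, stmt14_applyEM_apply1]
    ring
  have m1 := hTD ha₁ hb₁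
  have m2 := hTD ha₂ hb₂
  have h := stmt14_key aR aF ρ (x 0 - y 0) (x 1 - y 1) (a₁ - b₁) (a₂ - b₂)
    haR.1 haR.2.le haF.1 haF.2.le hρ (by nlinarith) (by nlinarith)
  rw [e1, e2, e3]
  linarith
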